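/- arXiv:1601.07520 — 4 statements merged into one kernel-verified Lean document; each statement's English description precedes it below -/
import Mathlib

section
/- Let x be the unique nonzero solution in (0,1) of exp(-(1-x)/(2x)) = x, and define γ₂ = (2x(1-x))⁻¹. Then γ₂ exists and satisfies 2.45 < γ₂ < 2.46. -/
open Real Set

private lemma exp_lb {y : ℝ} (hy : 0 ≤ y) :
    1 + y + y^2/2 + y^3/6 + y^4/24 + y^5/120 ≤ Real.exp y := by
  have h := Real.sum_le_exp_of_nonneg hy 6
  simp [Finset.sum_range_succ, Nat.factorial] at h
  convert h using 1

private lemma exp_ub {y : ℝ} (hy : 0 ≤ y) (hy1 : y ≤ 1) :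
    Real.exp y ≤ 1 + y + y^2/2 + y^3/6 + y^4/24 + y^5/120 + y^6*7/4320 := by
  have h := Real.exp_bound' hy hy1 (n := 6) (by norm_num)
  simp [Finset.sum_range_succ, Nat.factorial] at h
  convert h using 1
  norm_num

-- exp(3579/2842) > 5000/1421, i.e. exp at the point (1-a)/(2a) for a = 0.2842
private lemma exp_big : (5000:ℝ)/1421 < Real.exp (3579/2842) := by
  have hy : (0:ℝ) ≤ 3579/5684 := by norm_num
  have h := exp_lb hy
  have hsq : Real.exp (3579/2842) = Real.exp (3579/5684) * Real.exp (3579/5684) := by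
    rw [← Real.exp_add]; norm_num
  have hpos : (0:ℝ) < 1 + 3579/5684 + (3579/5684:ℝ)^2/2 + (3579/5684:ℝ)^3/6
      + (3579/5684:ℝ)^4/24 + (3579/5684:ℝ)^5/120 := by norm_num
  have h2 : (5000:ℝ)/1421 <
      (1 + 3579/5684 + (3579/5684:ℝ)^2/2 + (3579/5684:ℝ)^3/6 + (3579/5684:ℝ)^4/24
        + (3579/5684:ℝ)^5/120) *
      (1 + 3579/5684 + (3579/5684:ℝ)^2/2 + (3579/5684:ℝ)^3/6 + (3579/5684:ℝ)^4/24
        + (3579/5684:ℝ)^5/120) := by norm_num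
  rw [hsq]
  calc (5000:ℝ)/1421 < _ := h2
    _ ≤ Real.exp (3579/5684) * Real.exp (3579/5684) :=
      mul_le_mul h h hpos.le (Real.exp_pos _).le

-- exp(7147/5706) < 10000/2853, i.e. exp at the point (1-b)/(2b) for b = 0.2853
private lemma exp_small : Real.exp (7147/5706) < (10000:ℝ)/2853 := by
  have hy : (0:ℝ) ≤ 7147/11412 := by norm_num
  have hy1 : (7147:ℝ)/11412 ≤ 1 := by norm_num
  have h := exp_ub hy hy1
  have hsq : Real.exp (7147/5706) = Real.exp (7147/11412) * Real.exp (7147/11412) := by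
    rw [← Real.exp_add]; norm_num
  set U : ℝ := 1 + 7147/11412 + (7147/11412:ℝ)^2/2 + (7147/11412:ℝ)^3/6 + (7147/11412:ℝ)^4/24
      + (7147/11412:ℝ)^5/120 + (7147/11412:ℝ)^6*7/4320 with hU
  have h2 : U * U < (10000:ℝ)/2853 := by rw [hU]; norm_num
  have hle : Real.exp (7147/11412) * Real.exp (7147/11412) ≤ U * U :=
    mul_le_mul h h (Real.exp_pos _).le (le_trans (Real.exp_pos _).le h)
  rw [hsq]; exact lt_of_le_of_lt hle h2

private noncomputable def Faux (t : ℝ) : ℝ := -((1 - t) / (2 * t)) - Real.log t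

private lemma Faux_hasDeriv {t : ℝ} (ht : 0 < t) :
    HasDerivAt Faux ((1 - 2*t) / (2*t^2)) t := by
  have h1 : HasDerivAt (fun t : ℝ => 1 - t) (-1) t := by
    simpa using (hasDerivAt_id' t).const_sub (1:ℝ)
  have h2 : HasDerivAt (fun t : ℝ => 2 * t) 2 t := by
    simpa using (hasDerivAt_id t).const_mul (2:ℝ)
  have hne : 2 * t ≠ 0 := by positivity
  have hdiv := h1.div h2 hne
  have hlog := Real.hasDerivAt_log ht.ne'
  have := (hdiv.neg).sub hlog
  have e : (1 - 2*t) / (2*t^2) = -((-1 * (2 * t) - (1 - t) * 2) / (2 * t) ^ 2) - t⁻¹ := by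
    field_simp
    ring
  rw [e]; exact this

private lemma Faux_mono : StrictMonoOn Faux (Set.Ioc 0 (1/2 : ℝ)) := by
  apply strictMonoOn_of_deriv_pos (convex_Ioc 0 (1/2))
  · intro t ht
    exact ((Faux_hasDeriv ht.1).continuousAt).continuousWithinAt
  · intro t ht
    rw [interior_Ioc] at ht
    rw [(Faux_hasDeriv ht.1).deriv]
    have ht0 : 0 < t := ht.1
    have h1 : 0 < 1 - 2*t := by linarith [ht.2]
    positivity

private lemma Faux_anti : StrictAntiOn Faux (Set.Icc (1/2 : ℝ) 1) := by
  apply strictAntiOn_of_deriv_neg (convex_Icc (1/2) 1)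
  · intro t ht
    exact ((Faux_hasDeriv (by linarith [ht.1] : (0:ℝ) < t)).continuousAt).continuousWithinAt
  · intro t ht
    rw [interior_Icc] at ht
    have ht0 : (0:ℝ) < t := by linarith [ht.1]
    rw [(Faux_hasDeriv ht0).deriv]
    have h1 : 1 - 2*t < 0 := by linarith [ht.1]
    have h2 : 0 < 2*t^2 := by positivity
    exact div_neg_of_neg_of_pos h1 h2

private lemma Faux_iff {t : ℝ} (ht : 0 < t) :
    Real.exp (-((1 - t) / (2 * t))) = t ↔ Faux t = 0 := by
  unfold Faux
  constructor
  · intro h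
    have hl := congrArg Real.log h
    rw [Real.log_exp] at hl
    linarith
  · intro h
    have : -((1 - t) / (2 * t)) = Real.log t := by linarith
    rw [this, Real.exp_log ht]

/-- The collapsibility threshold constant `γ₂`: there is a unique `x ∈ (0,1)` with
`exp (-(1-x)/(2x)) = x`, and `γ₂ = (2x(1-x))⁻¹` satisfies `2.45 < γ₂ < 2.46`. -/
theorem gamma_two_exists_and_bounds :
    ∃ x : ℝ, (x ∈ Set.Ioo (0 : ℝ) 1 ∧ Real.exp (-((1 - x) / (2 * x))) = x) ∧
      (∀ x' : ℝ, x' ∈ Set.Ioo (0 : ℝ) 1 → Real.exp (-((1 - x') / (2 * x'))) = x' → x' = x) ∧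
      2.45 < (2 * x * (1 - x))⁻¹ ∧ (2 * x * (1 - x))⁻¹ < 2.46 := by
  set g : ℝ → ℝ := fun t => Real.exp (-((1 - t) / (2 * t))) - t with hg
  -- g 0.2842 < 0
  have hga : g 0.2842 < 0 := by
    have hval : -((1 - (0.2842:ℝ)) / (2 * 0.2842)) = -(3579/2842 : ℝ) := by norm_num
    have h1 : Real.exp (-(3579/2842 : ℝ)) < 0.2842 := by
      rw [Real.exp_neg]
      have h := exp_big
      have hpos : (0:ℝ) < 5000/1421 := by norm_num
      have := inv_strictAnti₀ hpos h
      calc (Real.exp (3579/2842))⁻¹ < ((5000:ℝ)/1421)⁻¹ := this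
        _ = 0.2842 := by norm_num
    simp only [hg, hval]
    linarith
  -- g 0.2853 > 0
  have hgb : 0 < g 0.2853 := by
    have hval : -((1 - (0.2853:ℝ)) / (2 * 0.2853)) = -(7147/5706 : ℝ) := by norm_num
    have h1 : (0.2853:ℝ) < Real.exp (-(7147/5706 : ℝ)) := by
      rw [Real.exp_neg]
      have h := exp_small
      have := inv_strictAnti₀ (Real.exp_pos _) h
      calc (0.2853:ℝ) = ((10000:ℝ)/2853)⁻¹ := by norm_num
        _ < (Real.exp (7147/5706))⁻¹ := this
    simp only [hg, hval]
    linarith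
  -- continuity of g on [0.2842, 0.2853]
  have hcont : ContinuousOn g (Set.Icc (0.2842:ℝ) 0.2853) := by
    apply ContinuousOn.sub _ continuousOn_id
    apply Real.continuous_exp.comp_continuousOn
    apply ContinuousOn.neg
    apply ContinuousOn.div
    · exact (continuousOn_const.sub continuousOn_id)
    · exact (continuousOn_const.mul continuousOn_id)
    · intro t ht
      have h1 : (0.2842:ℝ) ≤ t := ht.1
      have : (0:ℝ) < t := by norm_num at h1 ⊢; linarith
      positivity
  have hab : (0.2842:ℝ) ≤ 0.2853 := by norm_num
  have hiv := intermediate_value_Icc hab hcont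
  have h0mem : (0:ℝ) ∈ Set.Icc (g 0.2842) (g 0.2853) := ⟨hga.le, hgb.le⟩
  obtain ⟨x, hx, hgx⟩ := hiv h0mem
  have hxa : (0.2842:ℝ) ≤ x := hx.1
  have hxb : x ≤ (0.2853:ℝ) := hx.2
  have hx0 : (0:ℝ) < x := by norm_num at hxa ⊢; linarith
  have hx1 : x < 1 := by norm_num at hxb ⊢; linarith
  have hfix : Real.exp (-((1 - x) / (2 * x))) = x := by
    have h' : g x = 0 := hgx
    simp only [hg] at h'
    linarith
  have hxhalf : x ≤ 1/2 := by norm_num at hxb ⊢; linarith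
  have hxIoc : x ∈ Set.Ioc (0:ℝ) (1/2) := ⟨hx0, hxhalf⟩
  have hFx : Faux x = 0 := (Faux_iff hx0).1 hfix
  refine ⟨x, ⟨⟨hx0, hx1⟩, hfix⟩, ?_, ?_, ?_⟩
  · -- uniqueness
    intro x' hx' hfix'
    have hFx' : Faux x' = 0 := (Faux_iff hx'.1).1 hfix'
    by_cases hc : x' ≤ 1/2
    · exact Faux_mono.injOn ⟨hx'.1, hc⟩ hxIoc (by rw [hFx', hFx])
    · exfalso
      push_neg at hc
      have h1mem : (1:ℝ) ∈ Set.Icc (1/2:ℝ) 1 := by norm_num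
      have hx'mem : x' ∈ Set.Icc (1/2:ℝ) 1 := ⟨hc.le, hx'.2.le⟩
      have hlt := Faux_anti hx'mem h1mem hx'.2
      have hF1 : Faux 1 = 0 := by norm_num [Faux]
      rw [hF1, hFx'] at hlt
      exact lt_irrefl 0 hlt
  · -- 2.45 < (2x(1-x))⁻¹
    have hprod : 2 * x * (1 - x) < 1/2.45 := by nlinarith
    have hppos : 0 < 2 * x * (1 - x) := by nlinarith
    rw [show (2.45:ℝ) = (1/2.45)⁻¹ by norm_num]
    exact inv_strictAnti₀ hppos hprod
  · -- (2x(1-x))⁻¹ < 2.46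
    have hprod : 1/2.46 < 2 * x * (1 - x) := by nlinarith
    have hppos : (0:ℝ) < 1/2.46 := by norm_num
    rw [show (2.46:ℝ) = (1/2.46)⁻¹ by norm_num]
    exact inv_strictAnti₀ hppos hprod
end

section
/- Let γ₂ be defined via the unique nonzero solution x of exp(-(1-x)/(2x)) = x as γ₂ = (2x(1-x))⁻¹, and let c₂ = (-log y)/(1-y)² where y is the unique root in (0,1) of 3(1-y) + (1+2y)·log y = 0. Then γ₂ < c₂. -/
open Real

lemma poly5_le_exp {s : ℝ} (hs : 0 ≤ s) :
    1 + s + s ^ 2 / 2 + s ^ 3 / 6 + s ^ 4 / 24 + s ^ 5 / 120 ≤ Real.exp s := by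
  have h := Real.sum_le_exp_of_nonneg hs 6
  simp [Finset.sum_range_succ] at h
  convert h using 1
  norm_num [Nat.factorial]

set_option maxHeartbeats 2000000 in
/-- `γ₂ < c₂`, where `γ₂ = (2x(1-x))⁻¹` for the unique nonzero solution `x ∈ (0,1)` of
`exp (-(1-x)/(2x)) = x`, and `c₂ = (-log y)/(1-y)²` for the unique root `y ∈ (0,1)` of
`3(1-y) + (1+2y) log y = 0`. -/
theorem gamma_two_lt_c_two :
    ∀ x y : ℝ,
      x ∈ Set.Ioo (0 : ℝ) 1 → Real.exp (-((1 - x) / (2 * x))) = x →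
      y ∈ Set.Ioo (0 : ℝ) 1 → 3 * (1 - y) + (1 + 2 * y) * Real.log y = 0 →
      (2 * x * (1 - x))⁻¹ < (-Real.log y) / (1 - y) ^ 2 := by
  intro x y hx hex hy hphi
  obtain ⟨hx0, hx1⟩ := hx
  obtain ⟨hy0, hy1⟩ := hy
  -- set t = (1-x)/(2x)
  obtain ⟨t, ht⟩ : ∃ t : ℝ, t = (1 - x) / (2 * x) := ⟨_, rfl⟩
  rw [← ht] at hex
  have ht0 : 0 < t := by rw [ht]; exact div_pos (by linarith) (by linarith)
  have hxt : x * (1 + 2 * t) = 1 := by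
    rw [ht]; field_simp; ring
  have hexpt : Real.exp t = 1 + 2 * t := by
    have h1 : Real.exp t * x = 1 := by
      rw [← hex, ← Real.exp_add]; simp
    have h2 : Real.exp t * (x * (1 + 2 * t)) = Real.exp t := by rw [hxt, mul_one]
    nlinarith [Real.exp_pos t]
  -- t > 1
  have ht1 : 1 < t := by
    by_contra h
    push_neg at h
    have hb := Real.exp_bound (x := t) (by rw [abs_of_nonneg ht0.le]; exact h) (n := 3) (by norm_num)
    rw [abs_of_nonneg ht0.le] at hb
    simp [Finset.sum_range_succ] at hb
    norm_num [Nat.factorial] at hb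
    rw [hexpt] at hb
    rw [abs_le] at hb
    have hc : t ^ 3 ≤ t ^ 2 := by nlinarith
    have hq : t ^ 2 ≤ t := by nlinarith
    nlinarith [hb.2]
  -- t < 1.28
  have ht2 : t < 1.28 := by
    by_contra h
    push_neg at h
    have hp := poly5_le_exp ht0.le
    rw [hexpt] at hp
    nlinarith [pow_pos ht0 2, pow_pos ht0 3, pow_pos ht0 4, pow_pos ht0 5]
  -- LHS equals (1+2t)^2/(4t)
  have hlhs : (2 * x * (1 - x))⁻¹ = (1 + 2 * t) ^ 2 / (4 * t) := by
    have h2t : (1 : ℝ) + 2 * t ≠ 0 := by positivity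
    have hxv : x = (1 + 2 * t)⁻¹ := by
      field_simp at hxt ⊢
      linarith [hxt]
    rw [hxv]
    rw [eq_div_iff (by positivity)]
    field_simp
    ring
  -- y side: s = -log y
  obtain ⟨s, hsdef⟩ : ∃ s : ℝ, s = -Real.log y := ⟨_, rfl⟩
  have hs0 : 0 < s := by
    rw [hsdef]
    have := Real.log_neg hy0 hy1
    linarith
  have hys : y = Real.exp (-s) := by
    rw [hsdef, neg_neg]
    exact (Real.exp_log hy0).symm
  have hkey : Real.exp s * (3 - s) = 3 + 2 * s := by
    have hl : Real.log y = -s := by rw [hsdef, neg_neg]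
    rw [hl] at hphi
    have hyexp : Real.exp s * y = 1 := by
      rw [hys, ← Real.exp_add]; simp
    nlinarith [Real.exp_pos s]
  -- s > 2
  have hs2 : 2 < s := by
    by_contra h
    push_neg at h
    have hp := poly5_le_exp hs0.le
    have h3s : 0 < 3 - s := by linarith
    have hsq : 0 < s ^ 2 := pow_pos hs0 2
    have h2 : s ^ 2 ≤ 4 := by nlinarith
    have h3 : s ^ 3 ≤ 8 := by nlinarith
    have h4 : s ^ 4 ≤ 16 := by nlinarith
    have hA : s ^ 4 ≤ 4 * s ^ 2 := by nlinarith [mul_le_mul_of_nonneg_left h2 hsq.le]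
    have hB : s ^ 5 ≤ 8 * s ^ 2 := by nlinarith [mul_le_mul_of_nonneg_left h3 hsq.le]
    have hC : s ^ 6 ≤ 16 * s ^ 2 := by nlinarith [mul_le_mul_of_nonneg_left h4 hsq.le]
    have hmul : (1 + s + s ^ 2 / 2 + s ^ 3 / 6 + s ^ 4 / 24 + s ^ 5 / 120) * (3 - s)
        ≤ Real.exp s * (3 - s) := mul_le_mul_of_nonneg_right hp h3s.le
    rw [hkey] at hmul
    linarith [hmul, hsq, hA, hB, hC, sq_nonneg s]
  -- y < 0.13535
  have hysmall : y < 0.13535 := by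
    rw [hys]
    have : Real.exp (-s) < Real.exp (-2) := Real.exp_lt_exp.mpr (by linarith)
    have he2 : (7.389 : ℝ) < Real.exp 2 := by
      have h1 : (2.7182818 : ℝ) < Real.exp 1 := by
        have := Real.exp_one_gt_d9
        nlinarith
      have h2 : Real.exp 2 = Real.exp 1 * Real.exp 1 := by
        rw [← Real.exp_add]; norm_num
      nlinarith [Real.exp_pos 1]
    have h2p := Real.exp_pos 2
    have hinv : (Real.exp 2)⁻¹ * Real.exp 2 = 1 := inv_mul_cancel₀ h2p.ne'
    have : Real.exp (-2) < 0.13535 := by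
      rw [Real.exp_neg]
      nlinarith [inv_pos.mpr h2p, hinv, he2]
    linarith
  -- RHS equals 3/((1-y)(1+2y))
  have hrhs : (-Real.log y) / (1 - y) ^ 2 = 3 / ((1 - y) * (1 + 2 * y)) := by
    have hl : Real.log y = -s := by rw [hsdef, neg_neg]
    have hseq : s * (1 + 2 * y) = 3 * (1 - y) := by
      rw [hl] at hphi; linarith
    have hy1' : (0:ℝ) < 1 - y := by linarith
    rw [hl, neg_neg]
    rw [div_eq_div_iff (by positivity) (by positivity)]
    linear_combination (1 - y) * hseq
  rw [hlhs, hrhs]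
  have hy1' : (0:ℝ) < 1 - y := by linarith
  rw [div_lt_div_iff₀ (by positivity) (by positivity)]
  have hb1 : (1 - y) * (1 + 2 * y) ≤ 1 + y := by nlinarith
  have hb2 : 1 + y < 1.13535 := by linarith
  have hpos : (0:ℝ) < (1 + 2 * t) ^ 2 := by positivity
  have hstep : (1 + 2 * t) ^ 2 * ((1 - y) * (1 + 2 * y)) < (1 + 2 * t) ^ 2 * 1.13535 := by
    have := mul_le_mul_of_nonneg_left hb1 hpos.le
    nlinarith
  have hfin : (1 + 2 * t) ^ 2 * 1.13535 < 3 * (4 * t) := by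
    nlinarith [mul_nonneg (by linarith : (0:ℝ) ≤ t - 1) (by linarith : (0:ℝ) ≤ 1.28 - t)]
  linarith
end

section
/- Let Y be a finite 2-dimensional simplicial complex and let R_∞(Y) be the complex obtained by repeatedly performing elementary collapses at free edges until no free edges remain. Then every core subcomplex of Y is a subcomplex of R_∞(Y); in particular, the cores of Y and of R_∞(Y) coincide. -/
open scoped Classical

/-- A core: a nonempty pure 2-dimensional complex (given by its set of triangles) in which
every edge of every triangle is contained in at least two triangles. -/
def IsCore {V : Type*} [DecidableEq V] (K : Finset (Finset V)) : Prop :=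
  K.Nonempty ∧ (∀ s ∈ K, s.card = 3) ∧
    ∀ s ∈ K, ∀ e ⊆ s, e.card = 2 → 2 ≤ (K.filter fun t => e ⊆ t).card

/-- An elementary collapse at a free edge `e`: remove `e` and the unique triangle `σ`
containing it. -/
def ElemCollapse {V : Type*} [DecidableEq V] (Y Y' : Finset (Finset V)) : Prop :=
  ∃ e σ : Finset V, e ∈ Y ∧ σ ∈ Y ∧ e.card = 2 ∧ σ.card = 3 ∧ e ⊆ σ ∧
    (Y.filter fun s => e ⊆ s ∧ s.card = 3) = {σ} ∧ Y' = (Y.erase e).erase σ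

/-- `Z` has no free edges. -/
def NoFreeEdges {V : Type*} [DecidableEq V] (Z : Finset (Finset V)) : Prop :=
  ∀ e ∈ Z, e.card = 2 → (Z.filter fun s => e ⊆ s ∧ s.card = 3).card ≠ 1

lemma core_step {V : Type*} [DecidableEq V] {Y Y' K : Finset (Finset V)}
    (h : ElemCollapse Y Y') (hK : IsCore K) (hKY : K ⊆ Y) : K ⊆ Y' := by
  obtain ⟨e, σ, heY, hσY, hec, hσc, heσ, hfilter, rfl⟩ := h
  intro s hs
  have hs3 := hK.2.1 s hs
  refine Finset.mem_erase.mpr ⟨?_, Finset.mem_erase.mpr ⟨?_, hKY hs⟩⟩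
  · rintro rfl
    have h2 := hK.2.2 s hs e heσ hec
    have hsub : (K.filter fun t => e ⊆ t) ⊆ {s} := by
      intro t ht
      rw [← hfilter]
      simp only [Finset.mem_filter] at ht ⊢
      exact ⟨hKY ht.1, ht.2, hK.2.1 t ht.1⟩
    have := Finset.card_le_card hsub
    simp at this
    omega
  · rintro rfl
    omega

lemma collapse_subset {V : Type*} [DecidableEq V] {Y Y' : Finset (Finset V)}
    (h : ElemCollapse Y Y') : Y' ⊆ Y := by
  obtain ⟨e, σ, _, _, _, _, _, _, rfl⟩ := h
  exact (Finset.erase_subset _ _).trans (Finset.erase_subset _ _)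

/-- If `Z = R_∞(Y)` is obtained from a finite 2-complex `Y` by repeatedly collapsing free
edges until none remain, then every core subcomplex of `Y` is a subcomplex of `Z`; in
particular the cores of `Y` and of `Z` coincide. -/
theorem cores_unaffected_by_collapses {V : Type*} [DecidableEq V]
    (Y Z : Finset (Finset V))
    (hcomplex : ∀ s ∈ Y, ∀ t ⊆ s, t.Nonempty → t ∈ Y)
    (hdim : ∀ s ∈ Y, s.card ≤ 3)
    (hcollapse : Relation.ReflTransGen ElemCollapse Y Z)
    (hstable : NoFreeEdges Z) :
    ∀ K : Finset (Finset V), IsCore K → (K ⊆ Y ↔ K ⊆ Z) := by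
  intro K hK
  constructor
  · intro hKY
    clear hstable
    induction hcollapse with
    | refl => exact hKY
    | tail h1 h2 ih => exact core_step h2 hK ih
  · intro hKZ
    have hZY : Z ⊆ Y := by
      clear hstable hKZ
      induction hcollapse with
      | refl => exact Finset.Subset.refl _
      | tail h1 h2 ih => exact (collapse_subset h2).trans ih
    exact hKZ.trans hZY
end

section
/- Let Y be a finite 2-dimensional simplicial complex such that every core subcomplex of Y contains a tetrahedron boundary, and such that all tetrahedron boundaries in Y are pairwise face-disjoint (no two share a 2-face). Let Z be obtained from Y by deleting exactly one 2-face from each tetrahedron boundary of Y. Then Z has no core subcomplex, hence Z is 2-collapsible. -/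
open scoped Classical

/-- A tetrahedron boundary of `Y`, identified with its 4-element vertex set. -/
def IsTetraBoundary {V : Type*} [DecidableEq V] (Y : Finset (Finset V)) (T : Finset V) : Prop :=
  T.card = 4 ∧ ∀ s ⊆ T, s.card = 3 → s ∈ Y

/-- 2-collapsibility. -/
def Collapsible2 {V : Type*} [DecidableEq V] (Y : Finset (Finset V)) : Prop :=
  ∃ Z : Finset (Finset V), Relation.ReflTransGen ElemCollapse Y Z ∧ ∀ s ∈ Z, s.card ≤ 2

/-- Auxiliary: a complex with no core, closed under edges of triangles, all faces of
dimension ≤ 2, is 2-collapsible.  Strong induction on the number of triangles. -/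
lemma collapse_of_no_core {V : Type*} [DecidableEq V] (Z : Finset (Finset V))
    (hnc : ∀ K ⊆ Z, ¬ IsCore K) :
    ∀ n (W : Finset (Finset V)), W ⊆ Z → (∀ s ∈ W, s.card ≤ 3) →
      (∀ t ∈ W, t.card = 3 → ∀ e ⊆ t, e.card = 2 → e ∈ W) →
      (W.filter fun s => s.card = 3).card = n → Collapsible2 W := by
  intro n
  induction n using Nat.strong_induction_on with
  | _ n IH =>
    intro W hWZ hWdim hWcl hcount
    set K : Finset (Finset V) := W.filter fun s => s.card = 3 with hK
    by_cases hKe : K.Nonempty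
    · -- find a free edge
      have hKZ : K ⊆ Z := (Finset.filter_subset _ _).trans hWZ
      have hcard3 : ∀ s ∈ K, s.card = 3 := fun s hs => (Finset.mem_filter.1 hs).2
      have hnotcore := hnc K hKZ
      unfold IsCore at hnotcore
      push_neg at hnotcore
      obtain ⟨s, hsK, e, hes, he2, hlt⟩ := hnotcore hKe hcard3
      have hsW : s ∈ W := (Finset.mem_filter.1 hsK).1
      have hs3 : s.card = 3 := hcard3 s hsK
      have heW : e ∈ W := hWcl s hsW hs3 e hes he2
      -- the filter is exactly {s}
      have hsmem : s ∈ K.filter fun t => e ⊆ t := Finset.mem_filter.2 ⟨hsK, hes⟩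
      have hone : (K.filter fun t => e ⊆ t).card = 1 := by
        have h1 : 1 ≤ (K.filter fun t => e ⊆ t).card := Finset.card_pos.2 ⟨s, hsmem⟩
        omega
      obtain ⟨a, ha⟩ := Finset.card_eq_one.1 hone
      have has : a = s := by
        have := hsmem
        rw [ha, Finset.mem_singleton] at this
        exact this.symm
      rw [has] at ha
      have hfil : (W.filter fun t => e ⊆ t ∧ t.card = 3) = {s} := by
        rw [← ha]
        ext t
        simp only [Finset.mem_filter, hK]
        tauto
      -- only s contains e among triangles of W
      have honly : ∀ t ∈ W, e ⊆ t → t.card = 3 → t = s := by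
        intro t htW het ht3
        have : t ∈ W.filter fun t => e ⊆ t ∧ t.card = 3 :=
          Finset.mem_filter.2 ⟨htW, het, ht3⟩
        rw [hfil, Finset.mem_singleton] at this
        exact this
      set W' : Finset (Finset V) := (W.erase e).erase s with hW'
      have hstep : ElemCollapse W W' :=
        ⟨e, s, heW, hsW, he2, hs3, hes, hfil, rfl⟩
      have hW'W : W' ⊆ W := (Finset.erase_subset _ _).trans (Finset.erase_subset _ _)
      -- closure for W'
      have hW'cl : ∀ t ∈ W', t.card = 3 → ∀ e' ⊆ t, e'.card = 2 → e' ∈ W' := by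
        intro t htW' ht3 e' he't he'2
        have htW : t ∈ W := hW'W htW'
        have hts : t ≠ s := (Finset.mem_erase.1 htW').1
        have he'W : e' ∈ W := hWcl t htW ht3 e' he't he'2
        have he'ne : e' ≠ e := by
          intro h
          subst h
          exact hts (honly t htW he't ht3)
        have he's : e' ≠ s := by intro h; rw [h, hs3] at he'2; omega
        exact Finset.mem_erase.2 ⟨he's, Finset.mem_erase.2 ⟨he'ne, he'W⟩⟩
      -- triangle count decreased
      have hsub : (W'.filter fun t => t.card = 3) ⊆ K.erase s := by
        intro t ht
        obtain ⟨htW', ht3⟩ := Finset.mem_filter.1 ht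
        exact Finset.mem_erase.2 ⟨(Finset.mem_erase.1 htW').1,
          Finset.mem_filter.2 ⟨hW'W htW', ht3⟩⟩
      have hlt' : (W'.filter fun t => t.card = 3).card < n := by
        calc (W'.filter fun t => t.card = 3).card ≤ (K.erase s).card :=
              Finset.card_le_card hsub
          _ < K.card := Finset.card_erase_lt_of_mem hsK
          _ = n := hcount
      obtain ⟨Z', hZ', hZ'dim⟩ := IH _ hlt' W' (hW'W.trans hWZ)
        (fun t ht => hWdim t (hW'W ht)) hW'cl rfl
      exact ⟨Z', Relation.ReflTransGen.head hstep hZ', hZ'dim⟩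
    · -- no triangles: done
      refine ⟨W, Relation.ReflTransGen.refl, fun t htW => ?_⟩
      have := hWdim t htW
      by_contra h
      push_neg at h
      have ht3 : t.card = 3 := by omega
      exact hKe ⟨t, Finset.mem_filter.2 ⟨htW, ht3⟩⟩

/-- If every core of `Y` contains a tetrahedron boundary and all tetrahedron boundaries of
`Y` are pairwise face-disjoint, then the complex `Z` obtained by deleting exactly one 2-face
from each tetrahedron boundary of `Y` has no core subcomplex, hence is 2-collapsible. -/
theorem no_core_after_deletion {V : Type*} [DecidableEq V]
    (Y Z : Finset (Finset V))
    (hcomplex : ∀ s ∈ Y, ∀ t ⊆ s, t.Nonempty → t ∈ Y)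
    (hdim : ∀ s ∈ Y, s.card ≤ 3)
    (hcore : ∀ K ⊆ Y, IsCore K →
      ∃ T : Finset V, IsTetraBoundary Y T ∧ ∀ s ⊆ T, s.card = 3 → s ∈ K)
    (hdisj : ∀ T₁ T₂ : Finset V, IsTetraBoundary Y T₁ → IsTetraBoundary Y T₂ → T₁ ≠ T₂ →
      ¬ ∃ s : Finset V, s.card = 3 ∧ s ⊆ T₁ ∧ s ⊆ T₂)
    (f : Finset V → Finset V)
    (hf : ∀ T : Finset V, IsTetraBoundary Y T → f T ⊆ T ∧ (f T).card = 3)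
    (hZ : Z = Y.filter fun s => ¬ ∃ T : Finset V, IsTetraBoundary Y T ∧ s = f T) :
    (∀ K ⊆ Z, ¬ IsCore K) ∧ Collapsible2 Z := by
  have hZY : Z ⊆ Y := by rw [hZ]; exact Finset.filter_subset _ _
  have hnc : ∀ K ⊆ Z, ¬ IsCore K := by
    intro K hKZ hc
    obtain ⟨T, hT, hTK⟩ := hcore K (hKZ.trans hZY) hc
    obtain ⟨hfT, hf3⟩ := hf T hT
    have : f T ∈ Z := hKZ (hTK (f T) hfT hf3)
    rw [hZ, Finset.mem_filter] at this
    exact this.2 ⟨T, hT, rfl⟩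
  refine ⟨hnc, ?_⟩
  apply collapse_of_no_core Z hnc (Z.filter fun s => s.card = 3).card Z
    (le_refl _) (fun s hs => hdim s (hZY hs)) ?_ rfl
  intro t htZ ht3 e het he2
  have heY : e ∈ Y := hcomplex t (hZY htZ) e het (Finset.card_pos.1 (by omega))
  rw [hZ, Finset.mem_filter]
  refine ⟨heY, ?_⟩
  rintro ⟨T, hT, rfl⟩
  have := (hf T hT).2
  omega
end
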